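/- Let Λ be a locally bounded k-category with nilpotent radical. A radical bounded-above complex X• of finitely supported projective Λ-modules with bounded homology is indecomposable in the category of complexes if and only if its image in the homotopy category K^{-,b}(Proj Λ) is indecomposable. -/
import Mathlib


open CategoryTheory Limits

/-- A morphism `f : X ⟶ Y` in a preadditive category lies in the (Jacobson)
radical if for every `g : Y ⟶ X` the endomorphism `𝟙 X - f ≫ g` is invertible. -/
def catRad {C : Type*} [Category C] [Preadditive C] {X Y : C} (f : X ⟶ Y) : Prop :=
  ∀ g : Y ⟶ X, IsIso (𝟙 X - f ≫ g)

/-- The composite of a chain of `n` composable morphisms. -/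
def chainComp {C : Type*} [Category C] (X : ℕ → C) (f : ∀ i, X i ⟶ X (i + 1)) :
    ∀ n : ℕ, X 0 ⟶ X n
  | 0 => 𝟙 _
  | n + 1 => chainComp X f n ≫ f n

/-- The radical of the category `C` is nilpotent: there is `n` such that every
composite of `n` radical morphisms vanishes. -/
def RadNilpotent (C : Type*) [Category C] [Preadditive C] : Prop :=
  ∃ n : ℕ, ∀ (X : ℕ → C) (f : ∀ i, X i ⟶ X (i + 1)),
    (∀ i, catRad (f i)) → chainComp X f n = 0

section

variable {C A : Type*} [Category C] [Preadditive C] [Category A] [Abelian A]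

/-- A complex is radical if all its differentials are radical morphisms. -/
def RadicalCx (X : CochainComplex C ℤ) : Prop := ∀ n : ℤ, catRad (X.d n (n + 1))

/-- A complex is bounded above. -/
def CxBddAbove (X : CochainComplex C ℤ) : Prop := ∃ N : ℤ, ∀ n ≥ N, IsZero (X.X n)

/-- A bounded-above complex over `C ⊆ A` has bounded homology, computed in the
ambient abelian category `A` via the inclusion `ι`. -/
def CxBddHomology (ι : C ⥤ A) [ι.Additive] (X : CochainComplex C ℤ) : Prop :=
  ∃ s : ℤ, ∀ n ≤ s, ((ι.mapHomologicalComplex (ComplexShape.up ℤ)).obj X).ExactAt n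

end

/-- An object of an additive category is indecomposable: it is nonzero and its
only idempotent endomorphisms are `0` and the identity. -/
def IndecObj {D : Type*} [Category D] [Preadditive D] (X : D) : Prop :=
  ¬ Limits.IsZero X ∧ ∀ f : X ⟶ X, f ≫ f = f → f = 0 ∨ f = 𝟙 X


section AuxRad

variable {C : Type*} [Category C] [Preadditive C]

/-- View an endomorphism as an element of the endomorphism ring. -/
def endOf {Y : C} (g : Y ⟶ Y) : CategoryTheory.End Y := g

@[simp] lemma endOf_eq {Y : C} (g : Y ⟶ Y) : endOf g = g := rfl

/-- `1 - ab` invertible implies `1 - ba` invertible. -/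
lemma isIso_one_sub_swap {X Y : C} (a : X ⟶ Y) (b : Y ⟶ X) (h : IsIso (𝟙 X - a ≫ b)) :
    IsIso (𝟙 Y - b ≫ a) := by
  obtain ⟨c, hc1, hc2⟩ := h.out
  refine ⟨⟨𝟙 Y + b ≫ c ≫ a, ?_, ?_⟩⟩
  · calc (𝟙 Y - b ≫ a) ≫ (𝟙 Y + b ≫ c ≫ a)
        = 𝟙 Y - b ≫ a + b ≫ (((𝟙 X - a ≫ b) ≫ c) ≫ a) := by
          simp only [Preadditive.sub_comp, Preadditive.comp_add, Preadditive.add_comp,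
            Preadditive.comp_sub, Category.id_comp, Category.comp_id, Category.assoc]
          try abel
      _ = 𝟙 Y := by rw [hc1]; simp
  · calc (𝟙 Y + b ≫ c ≫ a) ≫ (𝟙 Y - b ≫ a)
        = 𝟙 Y - b ≫ a + b ≫ ((c ≫ (𝟙 X - a ≫ b)) ≫ a) := by
          simp only [Preadditive.sub_comp, Preadditive.comp_add, Preadditive.add_comp,
            Preadditive.comp_sub, Category.id_comp, Category.comp_id, Category.assoc]
          try abel
      _ = 𝟙 Y := by rw [hc2]; simp

lemma catRad_comp_right {X Y Z : C} {f : X ⟶ Y} (hf : catRad f) (v : Y ⟶ Z) :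
    catRad (f ≫ v) := fun g => by
  rw [Category.assoc]; exact hf (v ≫ g)

lemma catRad_comp_left {X Y Z : C} {f : X ⟶ Y} (hf : catRad f) (u : Z ⟶ X) :
    catRad (u ≫ f) := fun g => by
  have h' : IsIso (𝟙 X - (f ≫ g) ≫ u) := by
    rw [Category.assoc]; exact hf (g ≫ u)
  have := isIso_one_sub_swap (f ≫ g) u h'
  rwa [← Category.assoc] at this

lemma catRad_add {X Y : C} {f g : X ⟶ Y} (hf : catRad f) (hg : catRad g) :
    catRad (f + g) := fun h => by
  have hA : IsIso (𝟙 X - f ≫ h) := hf h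
  have hB : IsIso (𝟙 X - g ≫ (h ≫ inv (𝟙 X - f ≫ h))) := hg _
  have key : 𝟙 X - (f + g) ≫ h
      = (𝟙 X - g ≫ (h ≫ inv (𝟙 X - f ≫ h))) ≫ (𝟙 X - f ≫ h) := by
    have hc : inv (𝟙 X - f ≫ h) ≫ (𝟙 X - f ≫ h) = 𝟙 X := IsIso.inv_hom_id _
    calc 𝟙 X - (f + g) ≫ h
        = (𝟙 X - f ≫ h) - g ≫ h ≫ 𝟙 X := by
          simp only [Preadditive.add_comp, Category.comp_id]; abel
      _ = (𝟙 X - f ≫ h) - g ≫ h ≫ (inv (𝟙 X - f ≫ h) ≫ (𝟙 X - f ≫ h)) := by rw [hc]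
      _ = (𝟙 X - g ≫ (h ≫ inv (𝟙 X - f ≫ h))) ≫ (𝟙 X - f ≫ h) := by
          simp only [Preadditive.sub_comp, Category.id_comp, Category.assoc]
  rw [key]
  infer_instance

/-- Each component of a null-homotopic endomorphism of a radical complex is radical. -/
lemma homotopy_component_rad {X : CochainComplex C ℤ} (hX : RadicalCx X)
    {f : X ⟶ X} (h : Homotopy f 0) (i : ℤ) : catRad (f.f i) := by
  have hc := h.comm i
  rw [dNext_eq h.hom (show (ComplexShape.up ℤ).Rel i (i + 1) by simp),
      prevD_eq h.hom (show (ComplexShape.up ℤ).Rel (i - 1) i by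
        simp only [ComplexShape.up_Rel]; omega)] at hc
  have hc' : f.f i = X.d i (i + 1) ≫ h.hom (i + 1) i + h.hom i (i - 1) ≫ X.d (i - 1) i := by
    simpa using hc
  rw [hc']
  have hd2 : catRad (X.d (i - 1) i) := by
    have := hX (i - 1)
    rwa [show i - 1 + 1 = i by omega] at this
  exact catRad_add (catRad_comp_right (hX i) _) (catRad_comp_left hd2 _)

lemma end_pow_eq_chainComp {Y : C} (r : CategoryTheory.End Y) (n : ℕ) :
    r ^ n = chainComp (fun _ => Y) (fun _ => r) n := by
  induction n with
  | zero => rfl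
  | succ n ih =>
    rw [pow_succ', CategoryTheory.End.mul_def, ih]
    rfl

lemma hom_pow_f {X : CochainComplex C ℤ} (f : CategoryTheory.End X) (n : ℕ) (i : ℤ) :
    (f ^ n).f i = endOf (HomologicalComplex.Hom.f f i) ^ n := by
  induction n with
  | zero =>
    show (𝟙 X : X ⟶ X).f i = 𝟙 (X.X i)
    simp
  | succ n ih =>
    calc (f ^ (n + 1)).f i
        = ((f ^ n : CategoryTheory.End X) ≫ f).f i := by rw [pow_succ']; rfl
      _ = (f ^ n).f i ≫ HomologicalComplex.Hom.f f i := HomologicalComplex.comp_f _ _ _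
      _ = (endOf (HomologicalComplex.Hom.f f i) ^ n) ≫ HomologicalComplex.Hom.f f i := by
          rw [ih]
      _ = endOf (HomologicalComplex.Hom.f f i) ^ (n + 1) := by rw [pow_succ']; rfl

/-- A null-homotopic endomorphism of a radical complex is nilpotent. -/
lemma nilpotent_of_nullHomotopic {X : CochainComplex C ℤ} (hnil : RadNilpotent C)
    (hX : RadicalCx X) {f : X ⟶ X} (h : Homotopy f 0) :
    IsNilpotent (endOf f) := by
  obtain ⟨n, hn⟩ := hnil
  refine ⟨n, ?_⟩
  show (endOf f ^ n : CategoryTheory.End X) = (0 : X ⟶ X)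
  apply HomologicalComplex.hom_ext
  intro i
  rw [hom_pow_f, end_pow_eq_chainComp]
  have hz := hn (fun _ => X.X i) (fun _ => endOf ((endOf f).f i))
    (fun _ => homotopy_component_rad hX h i)
  rw [hz]
  simp

/-- The quotient functor to the homotopy category, as a ring homomorphism on
endomorphism rings. -/
def quotRingHom (X : CochainComplex C ℤ) :
    CategoryTheory.End X →+*
      CategoryTheory.End ((HomotopyCategory.quotient C (ComplexShape.up ℤ)).obj X) where
  toFun f := (HomotopyCategory.quotient C (ComplexShape.up ℤ)).map f
  map_one' := (HomotopyCategory.quotient C (ComplexShape.up ℤ)).map_id X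
  map_mul' f g := (HomotopyCategory.quotient C (ComplexShape.up ℤ)).map_comp g f
  map_zero' := (HomotopyCategory.quotient C (ComplexShape.up ℤ)).map_zero X X
  map_add' f g := (HomotopyCategory.quotient C (ComplexShape.up ℤ)).map_add

end AuxRad

/-- Let `Λ` be a locally bounded `k`-category with nilpotent radical,
`C = Proj Λ` embedded via `ι` in the abelian category `A = Mod^b Λ`.  A radical
bounded-above complex `X` of finitely supported projective `Λ`-modules with bounded
homology is indecomposable in the category of complexes if and only if its image in
the homotopy category `K^{-,b}(Proj Λ)` is indecomposable. -/
theorem radical_complex_indecomposable_iff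
    (k : Type*) [Field k] {C A : Type*} [Category C] [Preadditive C]
    [CategoryTheory.Linear k C] [Category A] [Abelian A] [CategoryTheory.Linear k A]
    (ι : C ⥤ A) [ι.Additive] [ι.Full] [ι.Faithful]
    (hproj : ∀ X : C, CategoryTheory.Projective (ι.obj X))
    (hfin : ∀ X Y : C, FiniteDimensional k (X ⟶ Y))
    (hnil : RadNilpotent C)
    (X : CochainComplex C ℤ) (h1 : RadicalCx X) (h2 : CxBddAbove X)
    (h3 : CxBddHomology ι X) :
    IndecObj X ↔
      IndecObj ((HomotopyCategory.quotient C (ComplexShape.up ℤ)).obj X) := by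
  classical
  set Q := HomotopyCategory.quotient C (ComplexShape.up ℤ) with hQ
  let φ := quotRingHom (C := C) X
  have hφ : ∀ f : X ⟶ X, φ (endOf f) = Q.map f := fun _ => rfl
  have hker : ∀ x ∈ RingHom.ker φ, IsNilpotent x := by
    intro x hx
    have hx' : Q.map x = Q.map 0 := by
      have h0 : φ x = 0 := hx
      calc Q.map x = φ x := rfl
        _ = 0 := h0
        _ = Q.map 0 := (map_zero φ).symm
    exact nilpotent_of_nullHomotopic hnil h1 (HomotopyCategory.homotopyOfEq x 0 hx')
  constructor
  · rintro ⟨hnz, hidem⟩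
    constructor
    · intro hz
      rw [IsZero.iff_id_eq_zero] at hz
      have h1' : φ (1 : CategoryTheory.End X) = 0 := by
        rw [map_one]
        exact hz
      obtain ⟨n, hn⟩ := hker 1 h1'
      rw [one_pow] at hn
      exact hnz ((IsZero.iff_id_eq_zero X).2 hn)
    · intro g hg
      obtain ⟨f, rfl⟩ := Q.map_surjective g
      have hfi : IsIdempotentElem (φ (endOf f)) := by
        show φ (endOf f) * φ (endOf f) = φ (endOf f)
        show Q.map f ≫ Q.map f = Q.map f
        exact hg
      obtain ⟨e, he, hee⟩ :=
        exists_isIdempotentElem_eq_of_ker_isNilpotent φ hker (φ (endOf f))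
          ⟨endOf f, rfl⟩ hfi
      have he' : (e : X ⟶ X) ≫ e = e := he
      rcases hidem e he' with h0 | h1'
      · left
        calc Q.map f = φ (endOf f) := rfl
          _ = φ e := hee.symm
          _ = φ 0 := by rw [show e = (0 : CategoryTheory.End X) from h0]
          _ = 0 := map_zero φ
      · right
        calc Q.map f = φ (endOf f) := rfl
          _ = φ e := hee.symm
          _ = φ 1 := by rw [show e = (1 : CategoryTheory.End X) from h1']
          _ = 1 := map_one φ
          _ = 𝟙 (Q.obj X) := rfl
  · rintro ⟨hnz, hidem⟩
    constructor
    · intro hz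
      apply hnz
      rw [IsZero.iff_id_eq_zero] at hz ⊢
      calc 𝟙 (Q.obj X) = Q.map (𝟙 X) := (Q.map_id X).symm
        _ = Q.map 0 := by rw [hz]
        _ = 0 := Q.map_zero X X
    · intro f hf
      have hfi : IsIdempotentElem (endOf f) := by
        show (f : X ⟶ X) ≫ f = f
        exact hf
      have hq : Q.map f ≫ Q.map f = Q.map f := by
        rw [← Q.map_comp, hf]
      rcases hidem (Q.map f) hq with h0 | h1'
      · left
        have hmem : endOf f ∈ RingHom.ker φ := by
          show φ (endOf f) = 0
          rw [hφ f, h0]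
        obtain ⟨n, hn⟩ := hker _ hmem
        have hz : endOf f = 0 := by
          rw [← hfi.pow_succ_eq n, pow_succ, hn, zero_mul]
        exact hz
      · right
        have h1f : (1 : CategoryTheory.End X) - endOf f ∈ RingHom.ker φ := by
          show φ (1 - endOf f) = 0
          have hsub : φ (1 - endOf f) = φ 1 - φ (endOf f) := φ.map_sub _ _
          rw [hsub, φ.map_one, hφ f, h1']
          exact sub_self _
        obtain ⟨n, hn⟩ := hker _ h1f
        have hone : IsIdempotentElem ((1 : CategoryTheory.End X) - endOf f) :=
          hfi.one_sub
        have hz : (1 : CategoryTheory.End X) - endOf f = 0 := by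
          rw [← hone.pow_succ_eq n, pow_succ, hn, zero_mul]
        have hf1 : endOf f = 1 := (sub_eq_zero.mp hz).symm
        exact hf1
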